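/- Let V : [0,∞) → ℝ be differentiable and nonnegative with V'(t) ≤ -c·V(t)^{α} for all t ≥ 0, where c > 0 and α > 1, and suppose V(0) ≥ 1. Then V(t) ≤ 1 for all t ≥ 1/(c(α-1)). -/

import Mathlib

theorem superlinear_phase (V V' : ℝ → ℝ) (c α : ℝ) (hc : 0 < c) (hα : 1 < α)
    (hdiff : ∀ t : ℝ, 0 ≤ t → HasDerivAt V (V' t) t)
    (hnonneg : ∀ t : ℝ, 0 ≤ t → 0 ≤ V t)
    (hineq : ∀ t : ℝ, 0 ≤ t → V' t ≤ -c * (V t) ^ α)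
    (hV0 : 1 ≤ V 0) :
    ∀ t : ℝ, 1 / (c * (α - 1)) ≤ t → V t ≤ 1 := by
  have hca : 0 < c * (α - 1) := mul_pos hc (by linarith)
  set T : ℝ := 1 / (c * (α - 1)) with hT
  have hT0 : 0 < T := by positivity
  -- V is antitone on [0, ∞)
  have hanti : AntitoneOn V (Set.Ici 0) := by
    apply antitoneOn_of_deriv_nonpos (convex_Ici 0)
    · exact fun s hs => ((hdiff s hs).continuousAt).continuousWithinAt
    · intro s hs
      rw [interior_Ici] at hs
      exact ((hdiff s hs.le).differentiableAt).differentiableWithinAt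
    · intro s hs
      rw [interior_Ici] at hs
      rw [(hdiff s hs.le).deriv]
      have h1 : (0:ℝ) ≤ (V s) ^ α := Real.rpow_nonneg (hnonneg s hs.le) α
      have := hineq s hs.le
      nlinarith
  -- it suffices to show V T ≤ 1
  suffices hVT : V T ≤ 1 by
    intro t ht
    exact le_trans (hanti (le_of_lt hT0) (le_trans hT0.le ht) ht) hVT
  by_contra h1
  push_neg at h1
  -- then V > 1 on [0, T]
  have hbig : ∀ s ∈ Set.Icc (0:ℝ) T, 1 < V s := fun s hs =>
    lt_of_lt_of_le h1 (hanti hs.1 (le_trans hs.1 hs.2) hs.2)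
  set g : ℝ → ℝ := fun s => (V s) ^ (1 - α) - c * (α - 1) * s with hg
  have hgderiv : ∀ s ∈ Set.Icc (0:ℝ) T,
      HasDerivAt g (V' s * (1 - α) * (V s) ^ (1 - α - 1) - c * (α - 1)) s := by
    intro s hs
    have hVs : V s ≠ 0 := by have := hbig s hs; linarith
    have h1 := (hdiff s hs.1).rpow_const (p := 1 - α) (Or.inl hVs)
    have h2 : HasDerivAt (fun x => c * (α - 1) * x) (c * (α - 1)) s := by
      simpa using (hasDerivAt_id s).const_mul (c * (α - 1))
    exact h1.sub h2
  have hmono : MonotoneOn g (Set.Icc 0 T) := by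
    apply monotoneOn_of_deriv_nonneg (convex_Icc 0 T)
    · exact fun s hs => (hgderiv s hs).continuousAt.continuousWithinAt
    · intro s hs
      rw [interior_Icc] at hs
      exact (hgderiv s (Set.mem_Icc_of_Ioo hs)).differentiableAt.differentiableWithinAt
    · intro s hs
      rw [interior_Icc] at hs
      have hs' := Set.mem_Icc_of_Ioo hs
      rw [(hgderiv s hs').deriv]
      have hVpos : 0 < V s := lt_trans one_pos (hbig s hs')
      have key : c * (α - 1) ≤ V' s * (1 - α) * (V s) ^ (1 - α - 1) := by
        have h2 : V' s ≤ -c * (V s) ^ α := hineq s hs'.1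
        have hp : 0 < (V s) ^ (1 - α - 1) := Real.rpow_pos_of_pos hVpos _
        have h3 : (-c * (V s) ^ α) * (1 - α) * (V s) ^ (1 - α - 1)
            ≤ V' s * (1 - α) * (V s) ^ (1 - α - 1) := by
          have hprod : 0 ≤ (-c * (V s) ^ α - V' s) * (α - 1) * (V s) ^ (1 - α - 1) :=
            mul_nonneg (mul_nonneg (by linarith) (by linarith)) hp.le
          nlinarith [hprod]
        have h4 : (-c * (V s) ^ α) * (1 - α) * (V s) ^ (1 - α - 1)
            = c * (α - 1) * ((V s) ^ α * (V s) ^ (1 - α - 1)) := by ring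
        rw [h4, ← Real.rpow_add hVpos] at h3
        have h5 : α + (1 - α - 1) = 0 := by ring
        rw [h5, Real.rpow_zero, mul_one] at h3
        exact h3
      linarith
  -- conclude: g 0 ≤ g T gives a contradiction
  have hle := hmono (Set.left_mem_Icc.mpr hT0.le) (Set.right_mem_Icc.mpr hT0.le) hT0.le
  have hg0 : 0 < g 0 := by
    have : (0:ℝ) < (V 0) ^ (1 - α) := Real.rpow_pos_of_pos (by linarith) _
    simp only [hg, mul_zero, sub_zero]
    linarith
  have hgT : g T < 0 := by
    have h6 : (V T) ^ (1 - α) < 1 :=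
      Real.rpow_lt_one_of_one_lt_of_neg h1 (by linarith)
    have h7 : c * (α - 1) * T = 1 := by
      rw [hT]; field_simp
      exact div_self (by linarith)
    simp only [hg]
    rw [h7]
    linarith
  linarith
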